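/- Let n ≥ 2, let L be a real symmetric positive semidefinite n×n matrix with eigenvalues 0 = λ₁ ≤ λ₂ ≤ … ≤ λₙ, λ₂ > 0, and orthonormal eigenvectors v₁, …, vₙ where v₁ = (1/√n)·1ₙ; let α > 0, hᵢ = 1/(1 + αλᵢ), qᵢ = 1 − hᵢ, and σᵢ ≥ 0. Suppose the ground-truth signal x* is random with mean μ·1ₙ (for some μ ∈ ℝ) and covariance diag(s₁², …, sₙ²), sⱼ ≥ 0. Then the expected MSE satisfies E[Σᵢ₌₂ⁿ qᵢ² (vᵢᵀ(x* − ((1ₙᵀx*)/n)·1ₙ))²] + Σᵢ₌₁ⁿ hᵢ² σᵢ² ≤ (1/(1 + 1/(αλₙ)))² · (n − 1)·s̄ + (1/(1 + αλ₂))² · (n − 1)·σ̄ + σ₁², where s̄ = (Σⱼ₌₁ⁿ sⱼ²)/n and σ̄ = (Σᵢ₌₂ⁿ σᵢ²)/(n − 1); in particular the mean μ·1ₙ of the random signal does not appear in the bound. -/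
import Mathlib


open Matrix MeasureTheory

/-- MSE-UB bound for random graph signals `x*` with mean `μ·1ₙ` and
covariance `diag(s₁², …, sₙ²)`: the expected MSE is at most
`(1/(1 + 1/(αλₙ)))²(n−1)s̄ + (1/(1 + αλ₂))²(n−1)σ̄ + σ₁²`, independent of `μ`. -/
theorem stmt_19 (n : ℕ) [NeZero n] (hn : 2 ≤ n)
    (L : Matrix (Fin n) (Fin n) ℝ) (hL : L.IsSymm)
    (hpsd : ∀ x : Fin n → ℝ, 0 ≤ x ⬝ᵥ L.mulVec x)
    (ev : Fin n → ℝ) (v : Fin n → Fin n → ℝ)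
    (hev0 : ev 0 = 0) (hmono : Monotone ev) (hev1 : 0 < ev 1)
    (heig : ∀ i, L.mulVec (v i) = ev i • v i)
    (horth : ∀ i j, v i ⬝ᵥ v j = if i = j then (1 : ℝ) else 0)
    (hv0 : v 0 = fun _ => 1 / Real.sqrt n)
    (α : ℝ) (hα : 0 < α)
    (σ : Fin n → ℝ) (hσ : ∀ i, 0 ≤ σ i)
    {Ω : Type*} [MeasurableSpace Ω] (P : Measure Ω) [IsProbabilityMeasure P]
    (X : Ω → Fin n → ℝ) (μm : ℝ) (s : Fin n → ℝ) (hs : ∀ j, 0 ≤ s j)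
    (hXint : ∀ j, Integrable (fun ω => X ω j) P)
    (hXmean : ∀ j, (∫ ω, X ω j ∂P) = μm)
    (hXcovint : ∀ j k, Integrable (fun ω => (X ω j - μm) * (X ω k - μm)) P)
    (hXcov : ∀ j k, (∫ ω, (X ω j - μm) * (X ω k - μm) ∂P)
      = if j = k then s j ^ 2 else 0) :
    (∫ ω, ∑ i ∈ Finset.univ.erase 0,
        (1 - 1 / (1 + α * ev i)) ^ 2 *
          (v i ⬝ᵥ (X ω - ((∑ j, X ω j) / (n : ℝ)) • fun _ => (1 : ℝ))) ^ 2 ∂P)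
      + ∑ i, (1 / (1 + α * ev i)) ^ 2 * σ i ^ 2
    ≤ (1 / (1 + 1 / (α * ev ⟨n - 1, by omega⟩))) ^ 2 *
        (((n : ℝ) - 1) * ((∑ j, s j ^ 2) / (n : ℝ)))
      + (1 / (1 + α * ev 1)) ^ 2 *
        (((n : ℝ) - 1) * ((∑ i ∈ Finset.univ.erase 0, σ i ^ 2) / ((n : ℝ) - 1)))
      + σ 0 ^ 2 := by
  have hn0 : (0:ℝ) < (n:ℝ) := by positivity
  have hn1 : (1:ℝ) < (n:ℝ) := by exact_mod_cast hn.trans_lt' (by norm_num)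
  set last : Fin n := ⟨n - 1, by omega⟩ with hlast
  -- eigenvalue facts
  have hval1 : (1 : Fin n).val = 1 := by
    rw [Fin.val_one']; exact Nat.mod_eq_of_lt (by omega)
  have hev_pos : ∀ i : Fin n, i ≠ 0 → 0 < ev i := by
    intro i hi
    refine hev1.trans_le (hmono ?_)
    rw [Fin.le_def, hval1]
    have : i.val ≠ 0 := fun h => hi (Fin.ext h)
    omega
  have hev_le : ∀ i : Fin n, ev i ≤ ev last := fun i => hmono (by
    rw [Fin.le_def]
    show i.val ≤ n - 1
    omega)
  -- q i and bounds
  set q : Fin n → ℝ := fun i => 1 - 1 / (1 + α * ev i) with hq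
  set qm : ℝ := 1 / (1 + 1 / (α * ev last)) with hqm
  have hlastpos : 0 < ev last := hev_pos last (by
    intro h
    have : (last : Fin n).val = 0 := by rw [h]; rfl
    simp [hlast] at this; omega)
  have hqm_eq : qm = 1 - 1 / (1 + α * ev last) := by
    rw [hqm]
    have h1 : 0 < α * ev last := by positivity
    field_simp
    ring
  have hq_nonneg : ∀ i, i ≠ 0 → 0 ≤ q i := by
    intro i hi
    have h1 : 0 < α * ev i := by have := hev_pos i hi; positivity
    have h2 : 1 / (1 + α * ev i) ≤ 1 := by
      rw [div_le_one (by linarith)]; linarith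
    simp only [hq]
    linarith
  have hq_le : ∀ i, i ≠ 0 → q i ≤ qm := by
    intro i hi
    rw [hqm_eq, hq]
    have h1 : 0 < 1 + α * ev i := by have := hev_pos i hi; nlinarith
    have h2 : 0 < 1 + α * ev last := by nlinarith
    have : 1 / (1 + α * ev last) ≤ 1 / (1 + α * ev i) := by
      apply one_div_le_one_div_of_le h1
      have := hev_le i; nlinarith
    linarith
  have hqm_nonneg : 0 ≤ qm := by
    rw [hqm_eq]
    have h2 : 0 < 1 + α * ev last := by nlinarith
    have : 1 / (1 + α * ev last) ≤ 1 := by rw [div_le_one h2]; nlinarith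
    linarith
  -- orthogonality of columns
  have hcol : ∀ j k, ∑ i, v i j * v i k = if j = k then (1:ℝ) else 0 := by
    have hMMt : (Matrix.of v) * (Matrix.of v)ᵀ = 1 := by
      ext i j
      simp [Matrix.mul_apply, Matrix.one_apply, ← horth i j, dotProduct]
    have hMtM : (Matrix.of v)ᵀ * (Matrix.of v) = 1 := mul_eq_one_comm.mp hMMt
    intro j k
    have := congrFun (congrFun hMtM j) k
    simpa [Matrix.mul_apply, Matrix.one_apply] using this
  have hsqrtn : Real.sqrt n > 0 := Real.sqrt_pos.mpr hn0
  have hv0sq : ∀ j, (v 0 j)^2 = 1 / n := by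
    intro j
    rw [hv0]
    simp [div_pow, Real.sq_sqrt hn0.le]
  -- rows other than 0 sum to zero
  have hrow : ∀ i : Fin n, i ≠ 0 → ∑ j, v i j = 0 := by
    intro i hi
    have h := horth i 0
    rw [hv0, if_neg hi] at h
    have : (∑ j, v i j) * (1 / Real.sqrt n) = 0 := by
      rw [Finset.sum_mul]; simpa [dotProduct] using h
    rcases mul_eq_zero.mp this with h' | h'
    · exact h'
    · exact absurd h' (by positivity)
  -- simplify dot product
  have hdot : ∀ (ω : Ω) (i : Fin n), i ≠ 0 →
      (v i ⬝ᵥ (X ω - ((∑ j, X ω j) / (n : ℝ)) • fun _ => (1 : ℝ)))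
        = ∑ j, v i j * (X ω j - μm) := by
    intro ω i hi
    have h0 := hrow i hi
    simp only [dotProduct, Pi.sub_apply, Pi.smul_apply, smul_eq_mul, mul_one,
      mul_sub, Finset.sum_sub_distrib]
    rw [← Finset.sum_mul, ← Finset.sum_mul, h0]
    ring
  -- the body of the integral, rewritten
  set c : Fin n → ℝ := fun i => (q i)^2 with hc
  have hbody : ∀ ω, (∑ i ∈ Finset.univ.erase 0,
        (1 - 1 / (1 + α * ev i)) ^ 2 *
          (v i ⬝ᵥ (X ω - ((∑ j, X ω j) / (n : ℝ)) • fun _ => (1 : ℝ))) ^ 2)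
      = ∑ i ∈ Finset.univ.erase 0, ∑ j, ∑ k,
          c i * (v i j * v i k) * ((X ω j - μm) * (X ω k - μm)) := by
    intro ω
    apply Finset.sum_congr rfl
    intro i hi
    have hi0 : i ≠ 0 := Finset.ne_of_mem_erase hi
    rw [hdot ω i hi0]
    have hsq : (∑ j, v i j * (X ω j - μm)) ^ 2
        = ∑ j, ∑ k, (v i j * (X ω j - μm)) * (v i k * (X ω k - μm)) := by
      rw [sq, Finset.sum_mul_sum]
    rw [hsq, Finset.mul_sum]
    apply Finset.sum_congr rfl
    intro j _
    rw [Finset.mul_sum]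
    apply Finset.sum_congr rfl
    intro k _
    ring
  -- integrability of each term
  have hint : ∀ (i j k : Fin n), Integrable
      (fun ω => c i * (v i j * v i k) * ((X ω j - μm) * (X ω k - μm))) P := by
    intro i j k
    exact (hXcovint j k).const_mul _
  -- compute the integral
  have hI : (∫ ω, ∑ i ∈ Finset.univ.erase 0,
        (1 - 1 / (1 + α * ev i)) ^ 2 *
          (v i ⬝ᵥ (X ω - ((∑ j, X ω j) / (n : ℝ)) • fun _ => (1 : ℝ))) ^ 2 ∂P)
      = ∑ i ∈ Finset.univ.erase 0, c i * ∑ j, (v i j)^2 * s j ^ 2 := by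
    rw [integral_congr_ae (Filter.Eventually.of_forall hbody)]
    rw [integral_finset_sum _ (fun i _ => integrable_finset_sum _
      (fun j _ => integrable_finset_sum _ (fun k _ => hint i j k)))]
    apply Finset.sum_congr rfl
    intro i hi
    rw [integral_finset_sum _ (fun j _ => integrable_finset_sum _ (fun k _ => hint i j k))]
    rw [Finset.mul_sum]
    apply Finset.sum_congr rfl
    intro j _
    rw [integral_finset_sum _ (fun k _ => hint i j k)]
    have : ∀ k, (∫ ω, c i * (v i j * v i k) * ((X ω j - μm) * (X ω k - μm)) ∂P)
        = c i * (v i j * v i k) * (if j = k then s j ^ 2 else 0) := by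
      intro k
      rw [integral_const_mul, hXcov j k]
    rw [Finset.sum_congr rfl (fun k _ => this k)]
    rw [Finset.sum_eq_single j]
    · simp [sq]; ring
    · intro k _ hk; simp [Ne.symm hk]
    · simp
  rw [hI]
  -- bound the first term
  have hT1 : ∑ i ∈ Finset.univ.erase 0, c i * ∑ j, (v i j)^2 * s j ^ 2
      ≤ qm ^ 2 * (((n : ℝ) - 1) * ((∑ j, s j ^ 2) / (n : ℝ))) := by
    have step1 : ∑ i ∈ Finset.univ.erase 0, c i * ∑ j, (v i j)^2 * s j ^ 2
        ≤ ∑ i ∈ Finset.univ.erase 0, qm^2 * ∑ j, (v i j)^2 * s j ^ 2 := by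
      apply Finset.sum_le_sum
      intro i hi
      have hi0 : i ≠ 0 := Finset.ne_of_mem_erase hi
      have hinner : 0 ≤ ∑ j, (v i j)^2 * s j ^ 2 :=
        Finset.sum_nonneg fun j _ => by positivity
      apply mul_le_mul_of_nonneg_right _ hinner
      rw [hc]
      exact pow_le_pow_left₀ (hq_nonneg i hi0) (hq_le i hi0) 2
    refine step1.trans ?_
    rw [← Finset.mul_sum]
    apply mul_le_mul_of_nonneg_left _ (by positivity)
    -- ∑_{i≠0} ∑_j v_ij² s_j² = ∑_j s_j² (1 - 1/n)
    have hswap : ∑ i ∈ Finset.univ.erase 0, ∑ j, (v i j)^2 * s j ^ 2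
        = ∑ j, (1 - 1/(n:ℝ)) * s j ^ 2 := by
      rw [Finset.sum_comm]
      apply Finset.sum_congr rfl
      intro j _
      have hall : ∑ i, (v i j)^2 = 1 := by
        have := hcol j j
        simpa [sq] using this
      have herase : ∑ i ∈ Finset.univ.erase 0, (v i j)^2 = 1 - 1/(n:ℝ) := by
        have h3 : (∑ i ∈ Finset.univ.erase 0, (v i j)^2) + (v 0 j)^2 = ∑ i, (v i j)^2 :=
          Finset.sum_erase_add _ _ (Finset.mem_univ 0)
        rw [hall, hv0sq j] at h3
        linarith
      rw [← Finset.sum_mul, herase]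
    rw [hswap, ← Finset.mul_sum]
    apply le_of_eq
    field_simp
  -- bound the second term
  have hone_le : ∀ i : Fin n, i ≠ 0 → ev 1 ≤ ev i := by
    intro i hi
    refine hmono ?_
    rw [Fin.le_def, hval1]
    have : i.val ≠ 0 := fun h => hi (Fin.ext h)
    omega
  have hn1' : (0:ℝ) < (n:ℝ) - 1 := by linarith
  have hT2 : ∑ i, (1 / (1 + α * ev i)) ^ 2 * σ i ^ 2
      ≤ (1 / (1 + α * ev 1)) ^ 2 *
          (((n : ℝ) - 1) * ((∑ i ∈ Finset.univ.erase 0, σ i ^ 2) / ((n : ℝ) - 1)))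
        + σ 0 ^ 2 := by
    have hsplit : (∑ i ∈ Finset.univ.erase 0, (1 / (1 + α * ev i)) ^ 2 * σ i ^ 2)
        + (1 / (1 + α * ev 0)) ^ 2 * σ 0 ^ 2 = ∑ i, (1 / (1 + α * ev i)) ^ 2 * σ i ^ 2 :=
      Finset.sum_erase_add _ _ (Finset.mem_univ 0)
    have h00 : (1 / (1 + α * (0:ℝ))) ^ 2 = 1 := by norm_num
    rw [hev0, h00, one_mul] at hsplit
    rw [← hsplit]
    have hfac : ((n : ℝ) - 1) * ((∑ i ∈ Finset.univ.erase 0, σ i ^ 2) / ((n : ℝ) - 1))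
        = ∑ i ∈ Finset.univ.erase 0, σ i ^ 2 := by
      field_simp
    rw [hfac]
    have hbd : ∑ i ∈ Finset.univ.erase 0, (1 / (1 + α * ev i)) ^ 2 * σ i ^ 2
        ≤ (1 / (1 + α * ev 1)) ^ 2 * ∑ i ∈ Finset.univ.erase 0, σ i ^ 2 := by
      rw [Finset.mul_sum]
      apply Finset.sum_le_sum
      intro i hi
      have hi0 : i ≠ 0 := Finset.ne_of_mem_erase hi
      have hm1 : 0 < α * ev 1 := mul_pos hα hev1
      have h1 : 0 < 1 + α * ev 1 := by linarith
      have hmi : α * ev 1 ≤ α * ev i := mul_le_mul_of_nonneg_left (hone_le i hi0) hα.le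
      have h2 : 0 < 1 + α * ev i := by linarith
      have h3 : 1 / (1 + α * ev i) ≤ 1 / (1 + α * ev 1) := by
        apply one_div_le_one_div_of_le h1
        linarith
      have h4 : (0:ℝ) ≤ 1 / (1 + α * ev i) := by positivity
      apply mul_le_mul_of_nonneg_right _ (sq_nonneg _)
      exact pow_le_pow_left₀ h4 h3 2
    linarith
  linarith
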